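/- arXiv:0809.0804 — 8 statements merged into one kernel-verified Lean document; each statement's English description precedes it below -/
import Mathlib

section
/- Let R be a commutative ring, let r be a natural number, and let λ₁,…,λ_r, h₁,…,h_r, k₁,…,k_r, d, x be elements of R. Let M be the (r+1)×(r+1) matrix over R whose entries are: M_{i,i} = x − λᵢ for 1 ≤ i ≤ r, M_{i,r+1} = hᵢ and M_{r+1,i} = kᵢ for 1 ≤ i ≤ r, M_{r+1,r+1} = x − d, and all other entries 0. Then det M = (x − d)·∏_{i=1}^{r}(x − λᵢ) − Σ_{i=1}^{r} hᵢ·kᵢ·∏_{j≠i}(x − λⱼ). -/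
open Matrix Polynomial

private def arrowM (R : Type*) [CommRing R] (r : ℕ) (lam h k : Fin r → R) (d x : R) :
    Matrix (Fin (r + 1)) (Fin (r + 1)) R :=
  Matrix.of fun (i j : Fin (r + 1)) =>
    if hi : (i : ℕ) < r then
      (if hj : (j : ℕ) < r then
        (if i = j then x - lam ⟨i, hi⟩ else 0)
      else h ⟨i, hi⟩)
    else
      (if hj : (j : ℕ) < r then k ⟨j, hj⟩ else x - d)

private lemma erase_zero_eq (r : ℕ) :
    (Finset.univ.erase (0 : Fin (r+1))) = Finset.univ.image Fin.succ := by
  ext j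
  simp [Finset.mem_erase, eq_comm, ← Fin.exists_succ_eq]

private lemma prod_erase_zero {R : Type*} [CommRing R] (r : ℕ) (f : Fin (r+1) → R) :
    ∏ j ∈ Finset.univ.erase (0 : Fin (r+1)), f j = ∏ j : Fin r, f j.succ := by
  rw [erase_zero_eq, Finset.prod_image (fun a _ b _ hab => Fin.succ_injective _ hab)]

private lemma erase_succ_eq (r : ℕ) (i : Fin r) :
    (Finset.univ.erase (Fin.succ i)) =
      insert (0 : Fin (r+1)) ((Finset.univ.erase i).image Fin.succ) := by
  ext j
  rcases Fin.eq_zero_or_eq_succ j with rfl | ⟨y, rfl⟩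
  · simp [Fin.succ_ne_zero, (Fin.succ_ne_zero i).symm]
  · simp [Fin.succ_injective, (Fin.succ_ne_zero y).symm,
      (Fin.succ_injective r).eq_iff, Fin.succ_ne_zero]

private lemma prod_erase_succ {R : Type*} [CommRing R] (r : ℕ) (i : Fin r) (f : Fin (r+1) → R) :
    ∏ j ∈ Finset.univ.erase (Fin.succ i), f j
      = f 0 * ∏ j ∈ Finset.univ.erase i, f j.succ := by
  rw [erase_succ_eq, Finset.prod_insert (by simp [eq_comm, Fin.succ_ne_zero]),
    Finset.prod_image (fun a _ b _ hab => Fin.succ_injective _ hab)]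

private lemma arrow_det (R : Type*) [CommRing R] :
    ∀ (r : ℕ) (lam h k : Fin r → R) (d x : R),
    (arrowM R r lam h k d x).det = (x - d) * ∏ i, (x - lam i)
      - ∑ i, h i * k i * ∏ j ∈ Finset.univ.erase i, (x - lam j)
  | 0, lam, h, k, d, x => by
    simp [arrowM, Matrix.det_fin_one]
  | (r+1), lam, h, k, d, x => by
    -- submatrix removing row 0, column 0 is the smaller arrow matrix
    have hS : (arrowM R (r+1) lam h k d x).submatrix Fin.succ Fin.succ
        = arrowM R r (lam ∘ Fin.succ) (h ∘ Fin.succ) (k ∘ Fin.succ) d x := by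
      ext i j
      simp only [arrowM, submatrix_apply, of_apply, Function.comp_apply, Fin.val_succ]
      split_ifs with h1 h2 h3 h4 h5 h6 h7 h8 <;>
        first
          | rfl
          | (exfalso; omega)
          | (exfalso; simp [Fin.ext_iff] at * <;> omega)
          | (congr 1; exact Fin.ext (by simp))
    -- the (last, 0) minor
    have hT : ((arrowM R (r+1) lam h k d x).submatrix
          ((Fin.last (r+1)).succAbove) Fin.succ).det
        = (-1)^r * h 0 * ∏ j : Fin r, (x - lam j.succ) := by
      rw [Fin.succAbove_last]
      rw [Matrix.det_succ_row_zero, Fin.sum_univ_castSucc]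
      have hmid : ∀ j : Fin r,
          (-1 : R) ^ ((Fin.castSucc j : Fin (r+1)) : ℕ) *
            ((arrowM R (r+1) lam h k d x).submatrix Fin.castSucc Fin.succ 0 j.castSucc) *
            (((arrowM R (r+1) lam h k d x).submatrix Fin.castSucc Fin.succ).submatrix
              Fin.succ (Fin.castSucc j).succAbove).det = 0 := by
        intro j
        have : (arrowM R (r+1) lam h k d x).submatrix Fin.castSucc Fin.succ 0 j.castSucc = 0 := by
          simp only [arrowM, submatrix_apply, of_apply]
          rw [dif_pos (by simp <;> omega), dif_pos (by simp <;> omega), if_neg]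
          simp [Fin.ext_iff]
        rw [this]; ring
      rw [Finset.sum_congr rfl (fun j _ => hmid j), Finset.sum_const_zero, zero_add]
      have hentry : (arrowM R (r+1) lam h k d x).submatrix Fin.castSucc Fin.succ 0 (Fin.last r)
          = h 0 := by
        simp only [arrowM, submatrix_apply, of_apply]
        rw [dif_pos (by simp), dif_neg (by simp)]
        rfl
      have hU : ((arrowM R (r+1) lam h k d x).submatrix Fin.castSucc Fin.succ).submatrix
            Fin.succ (Fin.last r).succAbove
          = Matrix.diagonal (fun j : Fin r => x - lam j.succ) := by
        rw [Fin.succAbove_last]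
        ext i j
        simp only [arrowM, submatrix_apply, of_apply, Matrix.diagonal]
        rw [dif_pos (by simp <;> omega), dif_pos (by simp <;> omega)]
        by_cases hij : i = j
        · subst hij
          rw [if_pos (by simp [Fin.ext_iff]), if_pos rfl]
          all_goals (first | rfl | (congr 1; exact Fin.ext (by simp)))
        · rw [if_neg (by simp [Fin.ext_iff] at * <;> omega), if_neg hij]
      rw [hentry, hU, Matrix.det_diagonal]
      simp
    rw [Matrix.det_succ_column_zero, Fin.sum_univ_succ, Fin.sum_univ_castSucc]
    have hmid : ∀ i : Fin r,
        (-1 : R) ^ (((Fin.castSucc i).succ : Fin (r+2)) : ℕ) *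
          (arrowM R (r+1) lam h k d x) (Fin.castSucc i).succ 0 *
          ((arrowM R (r+1) lam h k d x).submatrix
            ((Fin.castSucc i).succ).succAbove Fin.succ).det = 0 := by
      intro i
      have : (arrowM R (r+1) lam h k d x) (Fin.castSucc i).succ 0 = 0 := by
        simp only [arrowM, of_apply]
        rw [dif_pos (by simp <;> omega), dif_pos (by simp <;> omega), if_neg (by simp [Fin.ext_iff])]
      rw [this]; ring
    rw [Finset.sum_congr rfl (fun i _ => hmid i), Finset.sum_const_zero, zero_add]
    have h00 : (arrowM R (r+1) lam h k d x) 0 0 = x - lam 0 := by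
      simp only [arrowM, of_apply]
      rw [dif_pos (by simp), dif_pos (by simp)]
      simp
      all_goals (first | rfl | (congr 1; exact Fin.ext (by simp)))
    have hlast0 : (arrowM R (r+1) lam h k d x) (Fin.last (r+1)) 0 = k 0 := by
      simp only [arrowM, of_apply]
      rw [dif_neg (by simp), dif_pos (by simp)]
      rfl
    have hsAbove : ((0 : Fin (r+2)).succAbove : Fin (r+1) → Fin (r+2)) = Fin.succ := by
      funext i; exact Fin.zero_succAbove i
    have hlastsucc : (Fin.last r).succ = Fin.last (r+1) := rfl
    have hRHSsum : ∑ i : Fin (r+1), h i * k i * ∏ j ∈ Finset.univ.erase i, (x - lam j)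
        = h 0 * k 0 * ∏ j : Fin r, (x - lam j.succ)
          + (x - lam 0) * ∑ i : Fin r, h i.succ * k i.succ *
              ∏ j ∈ Finset.univ.erase i, (x - lam j.succ) := by
      rw [Fin.sum_univ_succ, prod_erase_zero r (fun j => x - lam j)]
      congr 1
      rw [Finset.mul_sum]
      refine Finset.sum_congr rfl fun i _ => ?_
      rw [prod_erase_succ r i (fun j => x - lam j)]
      ring
    rw [h00, hlastsucc, hlast0, hsAbove, hS, hT,
      arrow_det R r (lam ∘ Fin.succ) (h ∘ Fin.succ) (k ∘ Fin.succ) d x]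
    simp only [Function.comp_apply]
    rw [Fin.prod_univ_succ, hRHSsum]
    simp only [Fin.val_zero, Fin.val_last, pow_zero, one_mul]
    have hsign : ((-1:R)^(r+1)) * ((-1:R)^r) = -1 := by
      rw [← pow_add]
      have h2 : r + 1 + r = 2 * r + 1 := by omega
      rw [h2, pow_succ, pow_mul]
      simp
    linear_combination (k 0 * h 0 * ∏ j : Fin r, (x - lam j.succ)) * hsign

theorem stmt_1 (R : Type*) [CommRing R] (r : ℕ)
    (lam h k : Fin r → R) (d x : R)
    (M : Matrix (Fin (r + 1)) (Fin (r + 1)) R)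
    (hM : M = Matrix.of fun (i j : Fin (r + 1)) =>
      if hi : (i : ℕ) < r then
        (if hj : (j : ℕ) < r then
          (if i = j then x - lam ⟨i, hi⟩ else 0)
        else h ⟨i, hi⟩)
      else
        (if hj : (j : ℕ) < r then k ⟨j, hj⟩ else x - d)) :
    M.det = (x - d) * ∏ i, (x - lam i)
      - ∑ i, h i * k i * ∏ j ∈ Finset.univ.erase i, (x - lam j) := by
  subst hM
  exact arrow_det R r lam h k d x
end

section
/- Let R be a commutative ring, let r be a natural number, let B be an r×r matrix over R, let H be an r×1 column matrix, let K be a 1×r row matrix, and let d ∈ R. Then the determinant of the (r+1)×(r+1) block matrix [[B, H],[K, d]] equals d·det(B) − K·adj(B)·H, where adj(B) denotes the adjugate of B (the transpose of the cofactor matrix) and K·adj(B)·H is the resulting 1×1 scalar. -/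
open Matrix Polynomial

lemma aux_key {R : Type*} [CommRing R] {r : ℕ}
    (B : Matrix (Fin r) (Fin r) R) (H : Matrix (Fin r) (Fin 1) R)
    (K : Matrix (Fin 1) (Fin r) R) (d : R) :
    (fromBlocks (1 : Matrix (Fin r) (Fin r) R) 0 (-(K * B.adjugate))
        (of fun _ _ : Fin 1 => B.det))
      * fromBlocks B H K (of fun _ _ => d)
      = fromBlocks B H 0 (of fun _ _ => B.det * d - (K * B.adjugate * H) 0 0) := by
  rw [fromBlocks_multiply]
  have h21 : -(K * B.adjugate) * B + (of fun _ _ : Fin 1 => B.det) * K = 0 := by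
    rw [Matrix.neg_mul, Matrix.mul_assoc, adjugate_mul]
    ext i j
    fin_cases i
    simp [Matrix.mul_apply, Fin.sum_univ_one, mul_comm]
  have h22 : -(K * B.adjugate) * H + (of fun _ _ : Fin 1 => B.det) * (of fun _ _ : Fin 1 => d)
      = of fun _ _ : Fin 1 => B.det * d - (K * B.adjugate * H) 0 0 := by
    ext i j
    fin_cases i; fin_cases j
    simp [Matrix.mul_apply, Fin.sum_univ_one, sub_eq_neg_add]
  rw [h21, h22]
  simp

lemma aux_mul {R : Type*} [CommRing R] {r : ℕ}
    (B : Matrix (Fin r) (Fin r) R) (H : Matrix (Fin r) (Fin 1) R)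
    (K : Matrix (Fin 1) (Fin r) R) (d : R) :
    B.det * (fromBlocks B H K (of fun _ _ => d)).det
      = B.det * (d * B.det - (K * B.adjugate * H) 0 0) := by
  have h := congrArg Matrix.det (aux_key B H K d)
  rw [det_mul, det_fromBlocks_zero₁₂, det_fromBlocks_zero₂₁] at h
  simpa [det_unique, mul_comm] using h

theorem stmt_2 (R : Type*) [CommRing R] (r : ℕ)
    (B : Matrix (Fin r) (Fin r) R) (H : Matrix (Fin r) (Fin 1) R)
    (K : Matrix (Fin 1) (Fin r) R) (d : R) :
    (Matrix.fromBlocks B H K (Matrix.of fun (_ _ : Fin 1) => d)).det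
      = d * B.det - (K * B.adjugate * H) 0 0 := by
  let f : R[X] →+* R := evalRingHom 0
  set B' : Matrix (Fin r) (Fin r) R[X] := B.map Polynomial.C + (X : R[X]) • 1 with hB'
  have hreg : IsRegular B'.det := by
    refine Polynomial.Monic.isRegular ?_
    simp only [hB', Polynomial.Monic.def, ← Polynomial.leadingCoeff_det_X_one_add_C B, add_comm]
  have h2 := hreg.left (aux_mul B' (H.map Polynomial.C) (K.map Polynomial.C) (Polynomial.C d))
  have h3 := congrArg f h2
  have hmapB : B'.map f = B := by
    ext i j
    simp [hB', f, Matrix.one_apply, apply_ite]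
  have hmapH : (H.map Polynomial.C).map f = H := by ext i j; simp [f]
  have hmapK : (K.map Polynomial.C).map f = K := by ext i j; simp [f]
  have hbot : ((of fun _ _ : Fin 1 => Polynomial.C d).map f)
      = (of fun _ _ : Fin 1 => d) := by ext i j; simp [f]
  have hadj : f ((K.map Polynomial.C * B'.adjugate * H.map Polynomial.C) 0 0)
      = (K * B.adjugate * H) 0 0 := by
    have : f ((K.map Polynomial.C * B'.adjugate * H.map Polynomial.C) 0 0)
        = ((K.map Polynomial.C * B'.adjugate * H.map Polynomial.C).map f) 0 0 := rfl
    rw [this, Matrix.map_mul, Matrix.map_mul]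
    have hadjB : B'.adjugate.map f = B.adjugate := by
      have := RingHom.map_adjugate f B'
      simp only [RingHom.mapMatrix_apply] at this
      rw [this, hmapB]
    rw [hadjB, hmapH, hmapK]
  rw [RingHom.map_det, RingHom.mapMatrix_apply, Matrix.fromBlocks_map, hmapB, hmapH, hmapK,
    hbot, map_sub, _root_.map_mul, RingHom.map_det, RingHom.mapMatrix_apply, hmapB, hadj] at h3
  simpa [f] using h3
end

section
/- Let R be a commutative ring, let n be a natural number, let A be an (n+1)×(n+1) matrix over R, let B be the top-left n×n submatrix of A, and let ε ∈ R. Let A_ε be the matrix obtained from A by adding ε to the bottom-right entry (i.e. A_ε = A + ε·E_{n+1,n+1}, where E_{n+1,n+1} is the matrix with a single 1 in position (n+1, n+1)). Then the characteristic polynomials satisfy charpoly(A_ε) = charpoly(A) − ε·charpoly(B) in R[X]. -/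
open Matrix Polynomial

theorem stmt_3 (R : Type*) [CommRing R] (n : ℕ)
    (A : Matrix (Fin (n + 1)) (Fin (n + 1)) R)
    (B : Matrix (Fin n) (Fin n) R)
    (hB : B = A.submatrix Fin.castSucc Fin.castSucc)
    (ε : R)
    (Aε : Matrix (Fin (n + 1)) (Fin (n + 1)) R)
    (hAε : Aε = A + ε • Matrix.single (Fin.last n) (Fin.last n) (1 : R)) :
    Aε.charpoly = A.charpoly - Polynomial.C ε * B.charpoly := by
  subst hB hAε
  unfold Matrix.charpoly
  have hsub : charmatrix (A.submatrix Fin.castSucc Fin.castSucc)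
      = (charmatrix A).submatrix Fin.castSucc Fin.castSucc := by
    ext i j
    simp [charmatrix_apply, Matrix.diagonal_apply, Fin.castSucc_inj]
  have h1 : charmatrix (A + ε • Matrix.single (Fin.last n) (Fin.last n) (1 : R))
      = (charmatrix A).updateRow (Fin.last n)
        (charmatrix A (Fin.last n) + (-C ε) • (Pi.single (Fin.last n) 1 : Fin (n+1) → R[X])) := by
    ext i j
    rcases eq_or_ne i (Fin.last n) with hi | hi
    · subst hi
      rcases eq_or_ne j (Fin.last n) with hj | hj
      · subst hj
        simp [charmatrix_apply, Matrix.single_apply_same]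
        ring
      · simp [charmatrix_apply, Matrix.updateRow_apply, Matrix.one_apply, Ne.symm hj,
          Matrix.single_apply_of_ne _ _ _ _ _ (by exact fun h => hj h.2.symm),
          Pi.single_apply, hj]
    · simp [charmatrix_apply, Matrix.updateRow_apply, hi,
        Matrix.single_apply_of_ne _ _ _ _ _ (by exact fun h => hi h.1.symm)]
  rw [h1, Matrix.det_updateRow_add, Matrix.det_updateRow_smul,
    Matrix.updateRow_eq_self]
  have h2 : ((charmatrix A).updateRow (Fin.last n) ((Pi.single (Fin.last n) 1 : Fin (n+1) → R[X]))).det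
      = ((charmatrix A).submatrix Fin.castSucc Fin.castSucc).det := by
    rw [Matrix.det_succ_row _ (Fin.last n)]
    rw [Finset.sum_eq_single (Fin.last n)]
    · simp [Fin.succAbove_last, Matrix.submatrix_updateRow_succAbove]
      congr 1
      ext i j
      simp [Matrix.updateRow_apply, (Fin.castSucc_lt_last i).ne]
    · intro b _ hb
      simp [Pi.single_apply, hb]
    · simp
  rw [h2, hsub]
  ring
end

section
/- Let n be a natural number, let A be a real (n+1)×(n+1) matrix, and let B be the top-left n×n submatrix of A. Suppose the characteristic polynomial of B has n distinct roots in ℂ (all complex eigenvalues of B are simple). Then the set of ε ∈ ℝ for which the characteristic polynomial of A + ε·E_{n+1,n+1} has a repeated root in ℂ is finite; equivalently, for all but finitely many ε ∈ ℝ, the matrix A + ε·E_{n+1,n+1} has n+1 distinct complex eigenvalues. -/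
open Matrix Polynomial

lemma charpoly_add_stdBasis {m : ℕ} (M : Matrix (Fin (m+1)) (Fin (m+1)) ℂ) (c : ℂ) :
    (M + c • Matrix.single (Fin.last m) (Fin.last m) (1 : ℂ)).charpoly
      = M.charpoly - Polynomial.C c * (M.submatrix Fin.castSucc Fin.castSucc).charpoly := by
  classical
  set N := charmatrix M with hN
  have hcm : charmatrix (M + c • Matrix.single (Fin.last m) (Fin.last m) (1 : ℂ))
      = N.updateRow (Fin.last m)
        (N (Fin.last m) + (-(Polynomial.C c)) • (Pi.single (Fin.last m) (1 : ℂ[X]) : Fin (m+1) → ℂ[X])) := by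
    refine Matrix.ext fun i j => ?_
    rcases eq_or_ne i (Fin.last m) with hi | hi
    · subst hi
      rcases eq_or_ne j (Fin.last m) with hj | hj
      · subst hj
        simp [charmatrix_apply, Matrix.single, hN, Pi.single_apply,
          Matrix.add_apply, Matrix.smul_apply]
        ring
      · simp [charmatrix_apply, Matrix.single, hN, Pi.single_apply, hj, Ne.symm hj,
          Matrix.add_apply, Matrix.smul_apply, Matrix.diagonal_apply]
    · have hcond : ¬(Fin.last m = i ∧ Fin.last m = j) := fun h => hi h.1.symm
      rw [Matrix.updateRow_ne hi]
      simp [charmatrix_apply, Matrix.single, hN, hcond,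
        Matrix.add_apply, Matrix.smul_apply]
  have hdet1 : det (N.updateRow (Fin.last m) ((Pi.single (Fin.last m) (1 : ℂ[X]) : Fin (m+1) → ℂ[X])))
      = det (charmatrix (M.submatrix Fin.castSucc Fin.castSucc)) := by
    rw [det_succ_row _ (Fin.last m)]
    rw [Finset.sum_eq_single (Fin.last m)]
    · have hsub : (N.updateRow (Fin.last m)
          ((Pi.single (Fin.last m) (1 : ℂ[X]) : Fin (m+1) → ℂ[X]))).submatrix
            (Fin.last m).succAbove (Fin.last m).succAbove
          = charmatrix (M.submatrix Fin.castSucc Fin.castSucc) := by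
        rw [Fin.succAbove_last]
        refine Matrix.ext fun i j => ?_
        rw [Matrix.submatrix_apply, Matrix.updateRow_ne (Fin.castSucc_lt_last i).ne]
        simp [hN, charmatrix_apply, Matrix.diagonal_apply, Fin.castSucc_inj]
      rw [hsub]
      simp [Matrix.updateRow_self, Pi.single_apply]
    · intro b _ hb
      simp [Matrix.updateRow_self, Pi.single_apply, hb]
    · simp
  have key : det (charmatrix (M + c • Matrix.single (Fin.last m) (Fin.last m) (1 : ℂ)))
      = det N - Polynomial.C c * det (charmatrix (M.submatrix Fin.castSucc Fin.castSucc)) := by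
    rw [hcm, det_updateRow_add, Matrix.updateRow_eq_self, det_updateRow_smul, hdet1]
    ring
  simpa [Matrix.charpoly] using key

theorem stmt_4 (n : ℕ)
    (A : Matrix (Fin (n + 1)) (Fin (n + 1)) ℝ)
    (B : Matrix (Fin n) (Fin n) ℝ)
    (hB : B = A.submatrix Fin.castSucc Fin.castSucc)
    (hsimple : ((B.map (Complex.ofReal : ℝ → ℂ)).charpoly.roots.toFinset.card = n)) :
    {ε : ℝ | ∃ z : ℂ,
      2 ≤ (((A + ε • Matrix.single (Fin.last n) (Fin.last n) (1 : ℝ)).map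
        (Complex.ofReal : ℝ → ℂ)).charpoly).rootMultiplicity z}.Finite := by
  classical
  set pA : ℂ[X] := ((A.map (Complex.ofReal : ℝ → ℂ)).charpoly) with hpA
  set pB : ℂ[X] := ((B.map (Complex.ofReal : ℝ → ℂ)).charpoly) with hpB
  have hpAmonic : pA.Monic := Matrix.charpoly_monic _
  have hpBmonic : pB.Monic := Matrix.charpoly_monic _
  have hpAdeg : pA.natDegree = n + 1 := by
    rw [hpA, Matrix.charpoly_natDegree_eq_dim]
    exact Fintype.card_fin (n + 1)
  have hpBdeg : pB.natDegree = n := by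
    rw [hpB, Matrix.charpoly_natDegree_eq_dim]
    exact Fintype.card_fin n
  -- the submatrix relation over ℂ
  have hsubmap : (A.map (Complex.ofReal : ℝ → ℂ)).submatrix Fin.castSucc Fin.castSucc
      = B.map (Complex.ofReal : ℝ → ℂ) := by
    subst hB; rfl
  -- charpoly expansion
  have H1 : ∀ ε : ℝ,
      (((A + ε • Matrix.single (Fin.last n) (Fin.last n) (1 : ℝ)).map
        (Complex.ofReal : ℝ → ℂ)).charpoly) = pA - Polynomial.C (ε : ℂ) * pB := by
    intro ε
    have hmap : (A + ε • Matrix.single (Fin.last n) (Fin.last n) (1 : ℝ)).map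
        (Complex.ofReal : ℝ → ℂ)
        = A.map (Complex.ofReal : ℝ → ℂ)
          + (ε : ℂ) • Matrix.single (Fin.last n) (Fin.last n) (1 : ℂ) := by
      refine Matrix.ext fun i j => ?_
      simp [Matrix.map_apply, Matrix.add_apply, Matrix.smul_apply, Matrix.single]
      split <;> simp
    rw [hmap, charpoly_add_stdBasis, hsubmap]
  -- simple roots of pB
  have hpBne : pB ≠ 0 := hpBmonic.ne_zero
  have hroots : Multiset.card pB.roots = n := by
    rw [← hpBdeg]
    exact (Polynomial.splits_iff_card_roots).mp (IsAlgClosed.splits pB)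
  have hnd : pB.roots.Nodup := by
    refine Multiset.toFinset_card_eq_card_iff_nodup.mp ?_
    rw [hroots]; exact hsimple
  have hBder : ∀ z : ℂ, pB.eval z = 0 → pB.derivative.eval z ≠ 0 := by
    intro z hz
    have hmem : z ∈ pB.roots := by
      rw [Polynomial.mem_roots hpBne]; exact hz
    have hn1 : 1 ≤ n := by
      rw [← hroots]
      exact Multiset.card_pos_iff_exists_mem.mpr ⟨z, hmem⟩
    have hder_ne : pB.derivative ≠ 0 := by
      have v4 : pB.coeff n = 1 := by rw [← hpBdeg]; exact hpBmonic.coeff_natDegree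
      intro h0
      have hc : pB.derivative.coeff (n - 1) = 0 := by rw [h0]; simp
      have hn' : (n - 1) + 1 = n := Nat.sub_add_cancel hn1
      rw [Polynomial.coeff_derivative, hn', v4, one_mul, Nat.cast_sub hn1] at hc
      have hnc : (n : ℂ) = 0 := by linear_combination hc
      have := Nat.cast_eq_zero.mp hnc
      omega
    have hmult : pB.rootMultiplicity z = 1 := by
      have h1 : pB.roots.count z = 1 := by
        have := Multiset.count_eq_one_of_mem hnd hmem
        exact this
      rw [Polynomial.count_roots] at h1
      exact h1
    have hd0 : pB.derivative.rootMultiplicity z = 0 := by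
      rw [Polynomial.derivative_rootMultiplicity_of_root hz, hmult]
    intro hcon
    have := (Polynomial.rootMultiplicity_pos hder_ne (x := z)).mpr hcon
    omega
  -- the resultant-like polynomial
  set R : ℂ[X] := pA * pB.derivative - pA.derivative * pB with hRdef
  have hRne : R ≠ 0 := by
    rcases Nat.eq_zero_or_pos n with hn0 | hn1
    · -- n = 0 : pB = 1
      subst hn0
      have hpB1 : pB = 1 := hpBmonic.natDegree_eq_zero.mp hpBdeg
      intro h0
      have h1 : pA.coeff 1 = 1 := by
        have hd : pA.natDegree = 1 := by omega
        rw [← hd]; exact hpAmonic.coeff_natDegree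
      have : R.coeff 0 = 0 := by rw [h0]; simp
      rw [hRdef, hpB1] at this
      simp [Polynomial.coeff_derivative, h1] at this
    · intro h0
      have hcoeff : R.coeff (n + n) = -1 := by
        have e1 : (pA * pB.derivative).coeff ((n + 1) + (n - 1))
            = pA.coeff (n + 1) * pB.derivative.coeff (n - 1) := by
          refine Polynomial.coeff_mul_add_eq_of_natDegree_le hpAdeg.le ?_
          exact (Polynomial.natDegree_derivative_le pB).trans (by omega)
        have e2 : (pA.derivative * pB).coeff (n + n)
            = pA.derivative.coeff n * pB.coeff n := by
          refine Polynomial.coeff_mul_add_eq_of_natDegree_le ?_ hpBdeg.le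
          exact (Polynomial.natDegree_derivative_le pA).trans (by omega)
        have he : (n + 1) + (n - 1) = n + n := by omega
        rw [he] at e1
        have v1 : pA.coeff (n + 1) = 1 := by
          rw [← hpAdeg]; exact hpAmonic.coeff_natDegree
        have v4 : pB.coeff n = 1 := by
          rw [← hpBdeg]; exact hpBmonic.coeff_natDegree
        have v2 : pB.derivative.coeff (n - 1) = (n : ℂ) := by
          have hn' : (n - 1) + 1 = n := by omega
          rw [Polynomial.coeff_derivative, hn', v4, one_mul, Nat.cast_sub hn1]
          ring
        have v3 : pA.derivative.coeff n = ((n : ℂ) + 1) := by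
          rw [Polynomial.coeff_derivative, v1, one_mul]
        rw [hRdef, Polynomial.coeff_sub, e1, e2, v1, v2, v3, v4]
        ring
      rw [h0] at hcoeff
      simp at hcoeff
  -- the recovery map
  set g : ℂ → ℂ := fun z => if pB.eval z = 0
      then pA.derivative.eval z / pB.derivative.eval z
      else pA.eval z / pB.eval z with hg
  have hfin : ((fun ε : ℝ => (ε : ℂ)) ⁻¹' (g '' ↑(R.roots.toFinset))).Finite := by
    refine Set.Finite.preimage (Complex.ofReal_injective.injOn) ?_
    exact Set.Finite.image g (R.roots.toFinset.finite_toSet)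
  refine hfin.subset ?_
  intro ε hε
  obtain ⟨z, hz⟩ := hε
  rw [H1 ε] at hz
  set q : ℂ[X] := pA - Polynomial.C (ε : ℂ) * pB with hq
  obtain ⟨u, hu⟩ : (X - Polynomial.C z) ^ 2 ∣ q :=
    dvd_trans (pow_dvd_pow _ hz) (Polynomial.pow_rootMultiplicity_dvd q z)
  have heval : q.eval z = 0 := by rw [hu]; simp
  have hdev : q.derivative.eval z = 0 := by
    rw [hu]
    simp [Polynomial.derivative_mul, Polynomial.derivative_pow]
  have e1 : pA.eval z = (ε : ℂ) * pB.eval z := by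
    have := heval
    rw [hq] at this
    simp at this
    linear_combination this
  have e2 : pA.derivative.eval z = (ε : ℂ) * pB.derivative.eval z := by
    have := hdev
    rw [hq] at this
    simp [Polynomial.derivative_sub, Polynomial.derivative_mul] at this
    linear_combination this
  have hRz : R.eval z = 0 := by
    rw [hRdef]
    simp [e1, e2]
    ring
  have hmem : z ∈ R.roots.toFinset := by
    rw [Multiset.mem_toFinset, Polynomial.mem_roots hRne]
    exact hRz
  refine ⟨z, hmem, ?_⟩
  rw [hg]
  by_cases h0 : pB.eval z = 0
  · have hd := hBder z h0
    simp only [h0, if_pos]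
    rw [e2]
    field_simp
  · simp only [h0, if_neg, ite_false]
    rw [e1]
    field_simp
end

section
/- Let p ∈ ℝ[X] be a polynomial of degree d = r + 2s with p(0) ≠ 0, whose number of real roots counted with multiplicity is exactly r (i.e. the multiset of real roots of p has cardinality r). Then there exist a nonzero real number α and a real symmetric d×d matrix A such that p(X) = α · det(J_{r+s,s} − X·A) in ℝ[X]. -/
open Matrix Polynomial

noncomputable def myE (r s : ℕ) : (Fin r ⊕ Fin 2 × Fin s) ≃ Fin (r + 2*s) :=
  ((Equiv.refl (Fin r)).sumCongr
    (((finTwoEquiv.prodCongr (Equiv.refl (Fin s))).trans (Equiv.boolProdEquivSum (Fin s))).trans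
      (finSumFinEquiv.trans (finCongr (two_mul s).symm)))).trans finSumFinEquiv

lemma myE_inl (r s : ℕ) (i : Fin r) : (myE r s (Sum.inl i) : ℕ) = i := by
  simp [myE]

lemma myE_inr0 (r s : ℕ) (j : Fin s) : (myE r s (Sum.inr (0, j)) : ℕ) = r + j := by
  simp [myE, finTwoEquiv, Equiv.boolProdEquivSum]

lemma myE_inr1 (r s : ℕ) (j : Fin s) : (myE r s (Sum.inr (1, j)) : ℕ) = r + s + j := by
  simp [myE, finTwoEquiv, Equiv.boolProdEquivSum]
  omega

noncomputable def A0 (r s : ℕ) (μ : Fin r → ℝ) (b c : Fin s → ℝ) :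
    Matrix (Fin r ⊕ Fin 2 × Fin s) (Fin r ⊕ Fin 2 × Fin s) ℝ :=
  fromBlocks (diagonal fun i => (μ i)⁻¹) 0 0
    (blockDiagonal fun j => !![-(b j)/(c j), Real.sqrt (c j)⁻¹; Real.sqrt (c j)⁻¹, 0])

lemma A0_symm (r s : ℕ) (μ : Fin r → ℝ) (b c : Fin s → ℝ) : (A0 r s μ b c)ᵀ = A0 r s μ b c := by
  unfold A0
  rw [fromBlocks_transpose, diagonal_transpose, transpose_zero, transpose_zero,
    blockDiagonal_transpose]
  have h2 : ∀ j : Fin s, (!![-(b j)/(c j), Real.sqrt (c j)⁻¹; Real.sqrt (c j)⁻¹, 0])ᵀ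
      = !![-(b j)/(c j), Real.sqrt (c j)⁻¹; Real.sqrt (c j)⁻¹, 0] := by
    intro j
    ext i k
    fin_cases i <;> fin_cases k <;> rfl
  rw [show (fun j => (!![-(b j)/(c j), Real.sqrt (c j)⁻¹; Real.sqrt (c j)⁻¹, 0])ᵀ)
      = (fun j => !![-(b j)/(c j), Real.sqrt (c j)⁻¹; Real.sqrt (c j)⁻¹, 0]) from funext h2]

lemma key (r s : ℕ) (μ : Fin r → ℝ) (hμ : ∀ i, μ i ≠ 0) (b c : Fin s → ℝ) (hc : ∀ j, 0 < c j) :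
    ∃ A : Matrix (Fin (r+2*s)) (Fin (r+2*s)) ℝ, Aᵀ = A ∧
      ((Matrix.diagonal fun i : Fin (r + 2*s) => if (i:ℕ) < r + s then (1:Polynomial ℝ) else -1)
          - (X : Polynomial ℝ) • A.map (C : ℝ → Polynomial ℝ)).det
        = (∏ i, (C (-(μ i)⁻¹) * (X - C (μ i)))) *
          ∏ j, (C (-(c j)⁻¹) * (X^2 + C (b j) * X + C (c j))) := by
  refine ⟨(reindex (myE r s) (myE r s)) (A0 r s μ b c), ?_, ?_⟩
  · rw [transpose_reindex, A0_symm]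
  have hJfun : (fun i : Fin (r + 2*s) => if (i:ℕ) < r + s then (1:Polynomial ℝ) else -1)
      = (Sum.elim (fun _ : Fin r => (1:Polynomial ℝ))
          (fun kj : Fin 2 × Fin s => if kj.1 = 0 then 1 else -1)) ∘ (myE r s).symm := by
    funext x
    obtain ⟨y, rfl⟩ := (myE r s).surjective x
    rw [Function.comp_apply, Equiv.symm_apply_apply]
    rcases y with i | ⟨k, j⟩
    · have := myE_inl r s i
      have hi := i.isLt
      simp only [Sum.elim_inl]
      rw [if_pos (by omega)]
    · fin_cases k <;> simp only [Fin.zero_eta, Fin.mk_one, Sum.elim_inr]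
      · have := myE_inr0 r s j
        have hj := j.isLt
        rw [if_pos (by omega)]
        simp
      · have := myE_inr1 r s j
        rw [if_neg (by omega)]
        simp
  have hJ : (Matrix.diagonal fun i : Fin (r + 2*s) =>
        if (i:ℕ) < r + s then (1:Polynomial ℝ) else -1)
      = (reindex (myE r s) (myE r s)) (Matrix.diagonal
          (Sum.elim (fun _ : Fin r => (1:Polynomial ℝ))
            (fun kj : Fin 2 × Fin s => if kj.1 = 0 then 1 else -1))) := by
    rw [reindex_apply, submatrix_diagonal_equiv, hJfun]
  set J0 := Matrix.diagonal
      (Sum.elim (fun _ : Fin r => (1:Polynomial ℝ))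
        (fun kj : Fin 2 × Fin s => if kj.1 = 0 then 1 else -1)) with hJ0
  set M0 := (A0 r s μ b c).map (C : ℝ → Polynomial ℝ) with hM0
  rw [hJ, reindex_apply, reindex_apply, ← submatrix_map]
  have hsub : J0.submatrix (myE r s).symm (myE r s).symm
        - (X : Polynomial ℝ) • M0.submatrix (myE r s).symm (myE r s).symm
      = (J0 - (X : Polynomial ℝ) • M0).submatrix (myE r s).symm (myE r s).symm := by
    ext i j
    simp [Matrix.submatrix_apply, Matrix.sub_apply, Matrix.smul_apply]
  rw [hsub, det_submatrix_equiv_self]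
  have hJ0' : J0 = fromBlocks (diagonal fun _ : Fin r => (1:Polynomial ℝ)) 0 0
      (blockDiagonal fun _ : Fin s =>
        diagonal (fun k : Fin 2 => if k = 0 then (1:Polynomial ℝ) else -1)) := by
    rw [hJ0, ← fromBlocks_diagonal, blockDiagonal_diagonal]
  have hM0' : M0 = fromBlocks (diagonal fun i => C ((μ i)⁻¹)) 0 0
      (blockDiagonal fun j =>
        (!![-(b j)/(c j), Real.sqrt (c j)⁻¹; Real.sqrt (c j)⁻¹, 0]).map (C : ℝ → Polynomial ℝ)) := by
    rw [hM0, A0, fromBlocks_map, diagonal_map (map_zero C),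
      blockDiagonal_map _ _ (map_zero C)]
    congr 1 <;> ext i j <;> simp
  rw [hJ0', hM0', fromBlocks_smul, sub_eq_add_neg, fromBlocks_neg, fromBlocks_add]
  simp only [smul_zero, neg_zero, add_zero]
  rw [det_fromBlocks_zero₂₁]
  have h1 : ((diagonal fun _ : Fin r => (1:Polynomial ℝ))
        + -((X:Polynomial ℝ) • diagonal fun i => C ((μ i)⁻¹)))
      = diagonal (fun i => 1 - (X:Polynomial ℝ) * C ((μ i)⁻¹)) := by
    ext i k
    by_cases h : i = k
    · subst h; simp [sub_eq_add_neg]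
    · simp [Matrix.diagonal_apply_ne _ h, Matrix.one_apply_ne h]
  rw [h1, det_diagonal]
  congr 1
  · refine Finset.prod_congr rfl fun i _ => ?_
    have hC : C ((μ i)⁻¹) * C (μ i) = 1 := by
      rw [← C_mul, inv_mul_cancel₀ (hμ i), C_1]
    rw [map_neg]
    linear_combination (-1 : Polynomial ℝ) * hC
  · have hBD : blockDiagonal (fun _ : Fin s =>
          diagonal (fun k : Fin 2 => if k = 0 then (1:Polynomial ℝ) else -1))
        + -((X:Polynomial ℝ) • blockDiagonal fun j =>
            (!![-(b j)/(c j), Real.sqrt (c j)⁻¹; Real.sqrt (c j)⁻¹, 0]).map (C : ℝ → Polynomial ℝ))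
        = blockDiagonal ((fun _ : Fin s =>
            diagonal (fun k : Fin 2 => if k = 0 then (1:Polynomial ℝ) else -1))
          + -((X:Polynomial ℝ) • fun j =>
            (!![-(b j)/(c j), Real.sqrt (c j)⁻¹; Real.sqrt (c j)⁻¹, 0]).map (C : ℝ → Polynomial ℝ))) := by
      rw [blockDiagonal_add, blockDiagonal_neg, blockDiagonal_smul]
    have h2 : ((fun _ : Fin s =>
            diagonal (fun k : Fin 2 => if k = 0 then (1:Polynomial ℝ) else -1))
          + -((X:Polynomial ℝ) • fun j =>
            (!![-(b j)/(c j), Real.sqrt (c j)⁻¹; Real.sqrt (c j)⁻¹, 0]).map (C : ℝ → Polynomial ℝ)))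
        = fun j => !![1 - (X:Polynomial ℝ) * C (-(b j)/(c j)), -((X:Polynomial ℝ) * C (Real.sqrt (c j)⁻¹));
            -((X:Polynomial ℝ) * C (Real.sqrt (c j)⁻¹)), -1] := by
      funext j
      ext i k
      fin_cases i <;> fin_cases k <;> simp [sub_eq_add_neg]
    rw [hBD, h2, det_blockDiagonal]
    refine Finset.prod_congr rfl fun j _ => ?_
    rw [det_fin_two_of]
    have he : C (Real.sqrt (c j)⁻¹) * C (Real.sqrt (c j)⁻¹) = C ((c j)⁻¹) := by
      rw [← C_mul, Real.mul_self_sqrt (inv_nonneg.2 (hc j).le)]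
    have hcc : C ((c j)⁻¹) * C (c j) = 1 := by
      rw [← C_mul, inv_mul_cancel₀ (hc j).ne', C_1]
    have hba : C (-(b j)/(c j)) = -(C ((c j)⁻¹) * C (b j)) := by
      rw [← C_mul, ← map_neg]
      congr 1
      field_simp
    rw [hba, map_neg]
    linear_combination hcc - X^2 * he

lemma quad_fact : ∀ (s : ℕ) (q : Polynomial ℝ), q ≠ 0 → q.natDegree = 2*s → q.roots = 0 →
    ∃ b c : Fin s → ℝ, (∀ j, 0 < c j) ∧
      q = C q.leadingCoeff * ∏ j, (X^2 + C (b j) * X + C (c j)) := by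
  intro s
  induction s with
  | zero =>
    intro q hq hdeg _
    have h0 : q.natDegree = 0 := by simpa using hdeg
    refine ⟨finZeroElim, finZeroElim, fun j => j.elim0, ?_⟩
    simp only [Finset.univ_eq_empty, Finset.prod_empty, mul_one]
    conv_lhs => rw [show q = C (q.coeff 0) from eq_C_of_natDegree_eq_zero h0]
    rw [Polynomial.leadingCoeff, h0]
  | succ n ih =>
    intro q hq hdeg hroots
    obtain ⟨z, hz⟩ : ∃ z : ℂ, aeval z q = 0 := by
      apply IsAlgClosed.exists_aeval_eq_zero
      have : 0 < q.natDegree := by omega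
      exact (natDegree_pos_iff_degree_pos.mp this).ne'
    have hzim : z.im ≠ 0 := by
      intro h0
      lift z to ℝ using h0 with x
      erw [aeval_ofReal, RCLike.ofReal_eq_zero] at hz
      have : x ∈ q.roots := by rwa [mem_roots hq]
      simp [hroots] at this
    obtain ⟨q', hq'⟩ := q.quadratic_dvd_of_aeval_eq_zero_im_ne_zero hz hzim
    set Q : Polynomial ℝ := X ^ 2 - C (2 * z.re) * X + C (‖z‖ ^ 2) with hQ
    have hQdeg : Q.natDegree = 2 := by rw [hQ]; compute_degree!
    have hQmonic : Q.Monic := by rw [hQ]; monicity!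
    have hq'0 : q' ≠ 0 := by rintro rfl; simp [hq'] at hq
    have hq'deg : q'.natDegree = 2*n := by
      have := hq' ▸ hdeg
      rw [natDegree_mul (hQmonic.ne_zero) hq'0, hQdeg] at this
      omega
    have hq'roots : q'.roots = 0 := by
      by_contra h
      obtain ⟨x, hx⟩ := Multiset.exists_mem_of_ne_zero h
      have : x ∈ q.roots := by
        rw [hq', roots_mul (by rw [← hq']; exact hq)]
        exact Multiset.mem_add.2 (Or.inr hx)
      simp [hroots] at this
    obtain ⟨b, c, hcpos, hfact⟩ := ih q' hq'0 hq'deg hq'roots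
    have hlc : q.leadingCoeff = q'.leadingCoeff := by
      rw [hq', leadingCoeff_mul, hQmonic.leadingCoeff, one_mul]
    refine ⟨Fin.cons (-(2*z.re)) b, Fin.cons (‖z‖^2) c, ?_, ?_⟩
    · intro j
      refine Fin.cases ?_ (fun i => by simpa using hcpos i) j
      simp only [Fin.cons_zero]
      have hz0 : z ≠ 0 := fun h => hzim (by simp [h])
      exact pow_pos (norm_pos_iff.mpr hz0) 2
    · rw [Fin.prod_univ_succ]
      simp only [Fin.cons_zero, Fin.cons_succ]
      have hQ2 : (X^2 + C (-(2*z.re))*X + C (‖z‖^2) : Polynomial ℝ) = Q := by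
        rw [hQ, map_neg]; ring
      rw [hQ2, hlc]
      conv_lhs => rw [hq', hfact]
      ring

theorem stmt_8 (r s : ℕ) (p : Polynomial ℝ)
    (hdeg : p.natDegree = r + 2 * s) (hp0 : p.eval 0 ≠ 0)
    (hroots : p.roots.card = r) :
    ∃ (α : ℝ) (A : Matrix (Fin (r + 2 * s)) (Fin (r + 2 * s)) ℝ),
      α ≠ 0 ∧ Aᵀ = A ∧
      p = C α *
        ((Matrix.diagonal fun i : Fin (r + 2 * s) =>
            if (i : ℕ) < r + s then (1 : Polynomial ℝ) else -1) -
          (X : Polynomial ℝ) • A.map (C : ℝ → Polynomial ℝ)).det := by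
  have hp : p ≠ 0 := fun h => hp0 (by simp [h])
  obtain ⟨q, hfactor, hqdeg, hqroots⟩ := p.exists_prod_multiset_X_sub_C_mul
  have hq0 : q ≠ 0 := by
    rintro rfl
    rw [mul_zero] at hfactor
    exact hp hfactor.symm
  have hqdeg' : q.natDegree = 2 * s := by omega
  obtain ⟨b, c, hc, hqfact⟩ := quad_fact s q hq0 hqdeg' hqroots
  set L := p.roots.toList with hL
  have hLlen : L.length = r := by rw [hL, Multiset.length_toList, hroots]
  subst hLlen
  set μ : Fin L.length → ℝ := fun i => L[(i : ℕ)] with hμdef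
  have hμ : ∀ i, μ i ≠ 0 := by
    intro i h0
    have hmem : μ i ∈ p.roots := by
      rw [← Multiset.mem_toList, ← hL]
      exact List.getElem_mem _
    have := isRoot_of_mem_roots hmem
    rw [h0] at this
    exact hp0 this
  have hcoe : (L : Multiset ℝ) = p.roots := by rw [hL]; exact p.roots.coe_toList
  have hprod : (p.roots.map fun a => X - C a).prod = ∏ i, (X - C (μ i)) := by
    rw [← hcoe, Multiset.map_coe, Multiset.prod_coe, ← List.ofFn_getElem_eq_map,
      List.prod_ofFn]
  obtain ⟨A, hAsymm, hdet⟩ := key L.length s μ hμ b c hc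
  set a1 : ℝ := ∏ i, -(μ i)⁻¹ with ha1def
  set a2 : ℝ := ∏ j, -(c j)⁻¹ with ha2def
  have ha1 : a1 ≠ 0 := by
    rw [ha1def]
    exact Finset.prod_ne_zero_iff.2 fun i _ => by simp [hμ i]
  have ha2 : a2 ≠ 0 := by
    rw [ha2def]
    exact Finset.prod_ne_zero_iff.2 fun j _ => by simp [(hc j).ne']
  have hlc : q.leadingCoeff ≠ 0 := leadingCoeff_ne_zero.2 hq0
  refine ⟨q.leadingCoeff * a1⁻¹ * a2⁻¹, A, by positivity, hAsymm, ?_⟩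
  rw [hdet]
  have e1 : (∏ i, C (-(μ i)⁻¹) * (X - C (μ i)))
      = C a1 * ∏ i, (X - C (μ i)) := by
    rw [Finset.prod_mul_distrib, ha1def, map_prod]
  have e2 : (∏ j, C (-(c j)⁻¹) * (X^2 + C (b j) * X + C (c j)))
      = C a2 * ∏ j, (X^2 + C (b j) * X + C (c j)) := by
    rw [Finset.prod_mul_distrib, ha2def, map_prod]
  rw [e1, e2]
  have hα : C q.leadingCoeff = C (q.leadingCoeff * a1⁻¹ * a2⁻¹) * C a1 * C a2 := by
    rw [← C_mul, ← C_mul]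
    congr 1
    field_simp
  conv_lhs => rw [← hfactor, hqfact, hprod]
  linear_combination ((∏ i, (X - C (μ i))) * ∏ j, (X^2 + C (b j) * X + C (c j))) * hα
end

section
/- Let r and s be natural numbers, d = r + 2s, and let A be a real symmetric d×d matrix. Then the polynomial p(X) = det(X·J_{r+s,s} − A) ∈ ℝ[X] has at least r real roots counted with multiplicity (i.e. the multiset of real roots of p has cardinality at least r). -/
open Matrix Polynomial Module

section Aux

variable {K : Type*} [Field K] {n : Type*} [Fintype n] [DecidableEq n]

lemma aux_charpoly_sub_smul_one (M : Matrix n n K) (μ : K) :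
    (M - μ • 1).charpoly = M.charpoly.comp (X + C μ) := by
  let g : K[X] →+* K[X] := (aeval (X + C μ) : K[X] →ₐ[K] K[X]).toRingHom
  have hg : ∀ p : K[X], g p = p.comp (X + C μ) := fun p => by
    simp [g, aeval_def, eval₂_eq_eval_map, Polynomial.comp]
  have key : charmatrix (M - μ • 1) = (charmatrix M).map g := by
    ext i j
    by_cases h : i = j
    · subst h
      simp only [charmatrix_apply_eq, Matrix.map_apply, hg, sub_comp, X_comp, C_comp,
        Matrix.sub_apply, Matrix.smul_apply, Matrix.one_apply_eq, smul_eq_mul, mul_one, map_sub]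
      ring
    · simp only [charmatrix_apply_ne _ _ _ h, Matrix.map_apply, hg, neg_comp, C_comp,
        Matrix.sub_apply, Matrix.smul_apply, Matrix.one_apply_ne h, smul_eq_mul, mul_zero,
        sub_zero]
  rw [Matrix.charpoly, key, ← RingHom.mapMatrix_apply, ← RingHom.map_det, Matrix.charpoly, hg]

variable {V : Type*} [AddCommGroup V] [Module K V] [FiniteDimensional K V]

lemma aux_finrank_maxGen_eq_rootMult (f : Module.End K V) (μ : K) :
    Module.finrank K (f.maxGenEigenspace μ) = f.charpoly.rootMultiplicity μ := by
  have h1 : f.maxGenEigenspace μ = (f - μ • 1).maxGenEigenspace 0 := by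
    ext x
    simp [Module.End.mem_maxGenEigenspace, zero_smul, sub_zero]
  have h2 : (f - μ • (1 : Module.End K V)).charpoly = f.charpoly.comp (X + C μ) := by
    let b := Module.finBasis K V
    rw [← LinearMap.charpoly_toMatrix (f - μ • 1) b, ← LinearMap.charpoly_toMatrix f b]
    have hmat : LinearMap.toMatrix b b (f - μ • 1) = LinearMap.toMatrix b b f - μ • 1 := by
      rw [map_sub, _root_.map_smul, LinearMap.toMatrix_one]
    rw [hmat, aux_charpoly_sub_smul_one]
  rw [h1, LinearMap.finrank_maxGenEigenspace_zero_eq, h2, rootMultiplicity_eq_natTrailingDegree]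

lemma aux_sum_finrank_eq_finrank_biSup {ι : Type*} [DecidableEq ι] {p : ι → Submodule K V}
    (hp : iSupIndep p) (t : Finset ι) :
    ∑ i ∈ t, finrank K (p i) = finrank K (⨆ i ∈ t, p i : Submodule K V) := by
  classical
  induction t using Finset.induction_on with
  | empty =>
    rw [show (⨆ i ∈ (∅ : Finset ι), p i) = ⊥ by simp, finrank_bot]; simp
  | @insert a t' ha ih =>
    rw [Finset.sum_insert ha, ih, Finset.iSup_insert]
    have hdisj : Disjoint (p a) (⨆ i ∈ t', p i) := by
      refine (hp a).mono_right ?_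
      exact iSup₂_le fun i hi => le_iSup₂_of_le i (by rintro rfl; exact ha hi) le_rfl
    have := Submodule.finrank_sup_add_finrank_inf_eq (p a) (⨆ i ∈ t', p i)
    rw [hdisj.eq_bot] at this
    simp only [finrank_bot, add_zero] at this
    omega

end Aux

section Form

variable {m : Type*} [Fintype m] [DecidableEq m]

omit [DecidableEq m] in
lemma aux_adj_step (Mc Jc : Matrix m m ℂ) (hadj : Mcᴴ * Jc = Jc * Mc) (u v : m → ℂ) :
    star (Mc *ᵥ u) ⬝ᵥ (Jc *ᵥ v) = star u ⬝ᵥ (Jc *ᵥ (Mc *ᵥ v)) := by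
  rw [star_mulVec, mulVec_mulVec, ← hadj, ← mulVec_mulVec, dotProduct_mulVec,
    dotProduct_mulVec, vecMul_vecMul, dotProduct_mulVec, vecMul_vecMul]

omit [DecidableEq m] in
lemma aux_sub_step (Mc Jc : Matrix m m ℂ) (hadj : Mcᴴ * Jc = Jc * Mc) (c : ℂ) (u v : m → ℂ) :
    star ((Mc.mulVecLin - (starRingEnd ℂ c) • 1) u) ⬝ᵥ (Jc *ᵥ v)
      = star u ⬝ᵥ (Jc *ᵥ ((Mc.mulVecLin - c • 1) v)) := by
  simp only [LinearMap.sub_apply, LinearMap.smul_apply, Module.End.one_apply, mulVecLin_apply,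
    star_sub, star_smul, sub_dotProduct, smul_dotProduct, mulVec_sub, mulVec_smul,
    dotProduct_sub, dotProduct_smul, RingHom.id_apply, starRingEnd_self_apply, smul_eq_mul,
    Complex.star_def]
  rw [aux_adj_step Mc Jc hadj]

omit [DecidableEq m] in
lemma aux_pow_step (Mc Jc : Matrix m m ℂ) (hadj : Mcᴴ * Jc = Jc * Mc) (c : ℂ) (N : ℕ)
    (u v : m → ℂ) :
    star (((Mc.mulVecLin - (starRingEnd ℂ c) • 1) ^ N) u) ⬝ᵥ (Jc *ᵥ v)
      = star u ⬝ᵥ (Jc *ᵥ (((Mc.mulVecLin - c • 1) ^ N) v)) := by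
  induction N generalizing u v with
  | zero => simp
  | succ N ih =>
    rw [pow_succ', pow_succ]
    simp only [Module.End.mul_apply]
    rw [aux_sub_step Mc Jc hadj c, ih]

lemma aux_genEigen_orthogonal (Mc Jc : Matrix m m ℂ) (hadj : Mcᴴ * Jc = Jc * Mc) {μ ν : ℂ}
    (hμν : μ ≠ (starRingEnd ℂ) ν) {u v : m → ℂ}
    (hu : u ∈ Module.End.maxGenEigenspace Mc.mulVecLin μ)
    (hv : v ∈ Module.End.maxGenEigenspace Mc.mulVecLin ν) :
    star u ⬝ᵥ (Jc *ᵥ v) = 0 := by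
  set φ : Module.End ℂ (m → ℂ) := Mc.mulVecLin with hφ
  set c := (starRingEnd ℂ) ν with hc
  have hmap : ∀ x ∈ φ.maxGenEigenspace μ, (φ - c • 1) x ∈ φ.maxGenEigenspace μ := fun x hx =>
    Module.End.mapsTo_maxGenEigenspace_of_comm
      ((Commute.refl φ).sub_right ((Commute.one_right φ).smul_right _)) μ hx
  set ψ : Module.End ℂ (φ.maxGenEigenspace μ) := (φ - c • 1).restrict hmap with hψ
  have hker : LinearMap.ker ψ = ⊥ := by
    rw [eq_bot_iff]
    rintro ⟨x, hx⟩ hk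
    rw [LinearMap.mem_ker] at hk
    have h0 : (φ - c • 1) x = 0 := congrArg Subtype.val hk
    have h1 : φ x = c • x := by
      rwa [LinearMap.sub_apply, LinearMap.smul_apply, Module.End.one_apply, sub_eq_zero] at h0
    have hx1 : x ∈ φ.genEigenspace c 1 := Module.End.mem_genEigenspace_one.mpr h1
    have hd := Module.End.disjoint_genEigenspace φ hμν ⊤ 1
    have hx0 : x = 0 := Submodule.disjoint_def.mp hd x hx hx1
    exact (Submodule.mem_bot ℂ).mpr (Subtype.ext hx0)
  have hinj : Function.Injective ψ := LinearMap.ker_eq_bot.mp hker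
  obtain ⟨N, hN⟩ := (Module.End.mem_maxGenEigenspace _ _ _).mp hv
  have hinjN : Function.Injective ⇑(ψ ^ N) := by
    intro a b hab
    simp only [Module.End.pow_apply] at hab
    exact hinj.iterate N hab
  obtain ⟨w, hw⟩ := (LinearMap.injective_iff_surjective.mp hinjN) ⟨u, hu⟩
  have hw' : ((φ - c • 1) ^ N) (w : m → ℂ) = u := by
    have h2 := congrArg Subtype.val hw
    rwa [hψ, Module.End.pow_restrict, LinearMap.restrict_apply] at h2
  rw [← hw', hc, aux_pow_step Mc Jc hadj ν N]
  simp [← hφ, hN]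

omit [DecidableEq m] in
lemma aux_bform_sum_sum (Jc : Matrix m m ℂ) {ι : Type*} (t : Finset ι) (g : ι → (m → ℂ)) :
    star (∑ i ∈ t, g i) ⬝ᵥ (Jc *ᵥ ∑ i ∈ t, g i)
      = ∑ i ∈ t, ∑ j ∈ t, star (g i) ⬝ᵥ (Jc *ᵥ g j) := by
  have hleft : ∀ v : m → ℂ, star (∑ i ∈ t, g i) ⬝ᵥ v = ∑ i ∈ t, star (g i) ⬝ᵥ v := by
    intro v
    rw [star_sum]
    simp only [dotProduct, Finset.sum_apply, Pi.star_apply, Finset.sum_mul]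
    exact Finset.sum_comm
  have hright : ∀ u : m → ℂ, u ⬝ᵥ (Jc *ᵥ ∑ j ∈ t, g j) = ∑ j ∈ t, u ⬝ᵥ (Jc *ᵥ g j) := by
    intro u
    rw [show Jc *ᵥ ∑ j ∈ t, g j = ∑ j ∈ t, Jc *ᵥ g j by
      simpa only [mulVecLin_apply] using map_sum Jc.mulVecLin g t]
    simp only [dotProduct, Finset.sum_apply, Finset.mul_sum]
    exact Finset.sum_comm
  calc star (∑ i ∈ t, g i) ⬝ᵥ (Jc *ᵥ ∑ i ∈ t, g i)
      = ∑ j ∈ t, star (∑ i ∈ t, g i) ⬝ᵥ (Jc *ᵥ g j) := hright _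
    _ = ∑ j ∈ t, ∑ i ∈ t, star (g i) ⬝ᵥ (Jc *ᵥ g j) :=
        Finset.sum_congr rfl fun j _ => hleft _
    _ = ∑ i ∈ t, ∑ j ∈ t, star (g i) ⬝ᵥ (Jc *ᵥ g j) := Finset.sum_comm

end Form

lemma aux_finrank_le_of_isotropic (r s : ℕ) (W : Submodule ℂ (Fin (r + 2 * s) → ℂ))
    (h : ∀ w ∈ W, star w ⬝ᵥ
      ((Matrix.diagonal fun i : Fin (r + 2 * s) => if (i : ℕ) < r + s then (1 : ℂ) else -1)
        *ᵥ w) = 0) :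
    finrank ℂ W ≤ s := by
  classical
  let g : Fin s → Fin (r + 2 * s) := fun j => ⟨r + s + (j : ℕ), by omega⟩
  let L : (Fin (r + 2 * s) → ℂ) →ₗ[ℂ] (Fin s → ℂ) := LinearMap.funLeft ℂ ℂ g
  have hinj : Function.Injective (L.comp W.subtype) := by
    rw [← LinearMap.ker_eq_bot, eq_bot_iff]
    rintro ⟨w, hw⟩ hk
    rw [LinearMap.mem_ker, LinearMap.comp_apply] at hk
    have hzero : ∀ i : Fin (r + 2 * s), r + s ≤ (i : ℕ) → w i = 0 := by
      intro i hi
      have hj : g ⟨(i : ℕ) - (r + s), by omega⟩ = i := by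
        apply Fin.ext
        simp only [g]
        omega
      have := congrFun hk ⟨(i : ℕ) - (r + s), by omega⟩
      simpa [L, LinearMap.funLeft_apply, hj] using this
    have hB := h w hw
    have hterm : ∀ i : Fin (r + 2 * s),
        star (w i) * ((if (i : ℕ) < r + s then (1 : ℂ) else -1) * w i)
          = (Complex.normSq (w i) : ℂ) := by
      intro i
      by_cases hi : (i : ℕ) < r + s
      · simp [hi, Complex.normSq_eq_conj_mul_self, Complex.star_def]
      · rw [hzero i (le_of_not_gt hi)]
        simp
    rw [dotProduct] at hB
    simp only [mulVec_diagonal, Pi.star_apply] at hB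
    rw [Finset.sum_congr rfl fun i _ => hterm i, ← Complex.ofReal_sum] at hB
    have hsum0 : ∑ i, Complex.normSq (w i) = 0 := by exact_mod_cast hB
    have hnorm0 := (Finset.sum_eq_zero_iff_of_nonneg
      (fun i _ => Complex.normSq_nonneg (w i))).mp hsum0
    have hw0 : w = 0 := funext fun i =>
      Complex.normSq_eq_zero.mp (hnorm0 i (Finset.mem_univ i))
    exact (Submodule.mem_bot ℂ).mpr (Subtype.ext hw0)
  calc finrank ℂ W ≤ finrank ℂ (Fin s → ℂ) := LinearMap.finrank_le_finrank_of_injective hinj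
    _ = s := Module.finrank_fin_fun ℂ

lemma aux_det_X_smul_sub {R : Type*} [CommRing R] {n : Type*} [Fintype n] [DecidableEq n]
    (J A : Matrix n n R) (hJ : J * J = 1) :
    ((X : R[X]) • J.map C - A.map C).det = C J.det * (J * A).charpoly := by
  have h1 : J.map C * charmatrix (J * A) = (X : R[X]) • J.map C - A.map C := by
    rw [charmatrix, RingHom.mapMatrix_apply, mul_sub,
      (scalar_commute (X : R[X]) (fun r' => mul_comm _ r') (J.map C)).eq.symm,
      scalar_apply, ← smul_eq_diagonal_mul, ← Matrix.map_mul, ← mul_assoc, hJ, one_mul]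
  rw [← h1, det_mul, ← RingHom.mapMatrix_apply, ← RingHom.map_det, Matrix.charpoly]

theorem stmt_9 (r s : ℕ) (A : Matrix (Fin (r + 2 * s)) (Fin (r + 2 * s)) ℝ)
    (hA : Aᵀ = A) :
    r ≤ ((X : Polynomial ℝ) •
        (Matrix.diagonal fun i : Fin (r + 2 * s) =>
          if (i : ℕ) < r + s then (1 : Polynomial ℝ) else -1) -
        A.map (C : ℝ → Polynomial ℝ)).det.roots.card := by
  classical
  set J : Matrix (Fin (r + 2 * s)) (Fin (r + 2 * s)) ℝ :=
    Matrix.diagonal (fun i => if (i : ℕ) < r + s then 1 else -1) with hJdef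
  have hJJ : J * J = 1 := by
    have hfun : (fun i : Fin (r + 2 * s) =>
        (if (i : ℕ) < r + s then (1 : ℝ) else -1) * (if (i : ℕ) < r + s then 1 else -1))
          = fun _ => (1 : ℝ) :=
      funext fun i => by by_cases h : (i : ℕ) < r + s <;> simp [h]
    rw [hJdef, diagonal_mul_diagonal, hfun, diagonal_one]
  have hJT : Jᵀ = J := diagonal_transpose _
  have hmapJ : (Matrix.diagonal fun i : Fin (r + 2 * s) =>
      if (i : ℕ) < r + s then (1 : Polynomial ℝ) else -1) = J.map C := by
    have hfun : (fun i : Fin (r + 2 * s) => if (i : ℕ) < r + s then (1 : Polynomial ℝ) else -1)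
        = fun i : Fin (r + 2 * s) => C (if (i : ℕ) < r + s then (1 : ℝ) else -1) :=
      funext fun i => by by_cases h : (i : ℕ) < r + s <;> simp [h]
    rw [hfun, hJdef, Matrix.diagonal_map (map_zero C)]
  have hdet : J.det ≠ 0 := by
    have h1 : J.det * J.det = 1 := by rw [← det_mul, hJJ, det_one]
    exact left_ne_zero_of_mul_eq_one h1
  rw [hmapJ, aux_det_X_smul_sub J A hJJ, Polynomial.roots_C_mul _ hdet]
  set pR := (J * A).charpoly with hpR
  set Mc : Matrix (Fin (r + 2 * s)) (Fin (r + 2 * s)) ℂ := (J * A).map (algebraMap ℝ ℂ) with hMc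
  set Jc : Matrix (Fin (r + 2 * s)) (Fin (r + 2 * s)) ℂ := J.map (algebraMap ℝ ℂ) with hJc
  set pC := Mc.charpoly with hpCdef
  have hpC : pC = pR.map (algebraMap ℝ ℂ) := Matrix.charpoly_map (J * A) (algebraMap ℝ ℂ)
  have hcard : Multiset.card pC.roots = r + 2 * s := by
    rw [splits_iff_card_roots.mp (IsAlgClosed.splits pC), hpCdef,
      Matrix.charpoly_natDegree_eq_dim, Fintype.card_fin]
  set T := pC.roots.filter (fun z => z.im = 0) with hT
  set N := pC.roots.filter (fun z => ¬ z.im = 0) with hN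
  have hTN : Multiset.card T + Multiset.card N = r + 2 * s := by
    rw [← hcard, ← Multiset.card_add, Multiset.filter_add_not]
  have hTle : Multiset.card T ≤ Multiset.card pR.roots := by
    have hle : T ≤ pR.roots.map (fun x : ℝ => (x : ℂ)) := by
      rw [Multiset.le_iff_count]
      intro z
      by_cases hz : z.im = 0
      · obtain ⟨x, rfl⟩ : ∃ x : ℝ, z = ↑x := ⟨z.re, Complex.ext (by simp) (by simp [hz])⟩
        have e1 : Multiset.count ((x : ℂ)) T = pC.rootMultiplicity ((x : ℂ)) := by
          rw [hT, Multiset.count_filter_of_pos (p := fun z : ℂ => z.im = 0) hz, count_roots]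
        have e2 : Multiset.count ((x : ℂ)) (pR.roots.map (fun x : ℝ => (x : ℂ)))
            = pR.rootMultiplicity x := by
          rw [Multiset.count_map_eq_count' _ _ Complex.ofReal_injective, count_roots]
        have e3 : pR.rootMultiplicity x = pC.rootMultiplicity ((x : ℂ)) := by
          rw [eq_rootMultiplicity_map (algebraMap ℝ ℂ).injective x, ← hpC]
          rfl
        rw [e1, e2, e3]
      · rw [hT, Multiset.count_filter_of_neg (p := fun z : ℂ => z.im = 0) hz]
        exact Nat.zero_le _
    simpa using Multiset.card_le_card hle
  have hconj : pC.roots.map (starRingEnd ℂ) = pC.roots := by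
    have h1 : pC.map (starRingEnd ℂ) = pC := by
      rw [hpC, Polynomial.map_map]
      congr 1
      exact RingHom.ext fun x => Complex.conj_ofReal x
    have h2 : (pC.map (starRingEnd ℂ)).roots = pC.roots.map (starRingEnd ℂ) :=
      (IsAlgClosed.splits pC).roots_map _
    rw [← h2, h1]
  set Npos := pC.roots.filter (fun z => 0 < z.im) with hNpos
  set Nneg := pC.roots.filter (fun z => z.im < 0) with hNneg
  have hNsplit : Multiset.card N = Multiset.card Npos + Multiset.card Nneg := by
    have h3 := Multiset.filter_add_filter (fun z : ℂ => 0 < z.im) (fun z : ℂ => z.im < 0)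
      pC.roots
    have h4 : pC.roots.filter (fun z : ℂ => 0 < z.im ∧ z.im < 0) = 0 :=
      Multiset.filter_eq_nil.mpr (fun z _ h => by obtain ⟨h5, h6⟩ := h; linarith)
    have h5 : pC.roots.filter (fun z : ℂ => 0 < z.im ∨ z.im < 0) = N := by
      rw [hN]
      apply Multiset.filter_congr
      intro z _
      constructor
      · rintro (h | h) <;> intro h0 <;> linarith
      · intro h
        rcases lt_or_gt_of_ne (fun h0 => h h0) with h' | h'
        · exact Or.inr h'
        · exact Or.inl h'
    rw [h5, h4, add_zero] at h3
    rw [hNpos, hNneg, ← Multiset.card_add, h3]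
  have hnegpos : Multiset.card Nneg = Multiset.card Npos := by
    have step1 : Multiset.card Nneg
        = Multiset.countP (fun z : ℂ => z.im < 0) (pC.roots.map (starRingEnd ℂ)) := by
      rw [hconj, hNneg, Multiset.countP_eq_card_filter]
    have step2 := Multiset.countP_map (starRingEnd ℂ) pC.roots (fun z : ℂ => z.im < 0)
    have step3 : pC.roots.filter (fun z => ((starRingEnd ℂ) z).im < 0) = Npos := by
      rw [hNpos]
      apply Multiset.filter_congr
      intro z _
      simp [Complex.conj_im, neg_lt_zero]
    rw [step1, step2, step3]
  -- spectral bound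
  have hadj : Mcᴴ * Jc = Jc * Mc := by
    have htr : (J * A)ᵀ = A * J := by rw [transpose_mul, hA, hJT]
    have hMcH : Mcᴴ = (A * J).map (algebraMap ℝ ℂ) := by
      rw [hMc]
      ext i j
      simp only [conjTranspose_apply, Matrix.map_apply, Complex.star_def,
        Complex.coe_algebraMap, Complex.conj_ofReal]
      rw [show (J * A) j i = (A * J) i j by rw [← htr, transpose_apply]]
    rw [hMcH, hJc, hMc, ← Matrix.map_mul, ← Matrix.map_mul]
    congr 1
    rw [mul_assoc, hJJ, mul_one, ← mul_assoc, hJJ, one_mul]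
  set φ : Module.End ℂ (Fin (r + 2 * s) → ℂ) := Mc.mulVecLin with hφdef
  have hφchar : φ.charpoly = pC := by
    have hb : LinearMap.toMatrix (Pi.basisFun ℂ (Fin (r + 2 * s)))
        (Pi.basisFun ℂ (Fin (r + 2 * s))) φ = Mc := by
      rw [LinearMap.toMatrix_eq_toMatrix']
      exact LinearMap.toMatrix'_toLin' Mc
    rw [← LinearMap.charpoly_toMatrix φ (Pi.basisFun ℂ (Fin (r + 2 * s))), hb]
  set t := Npos.toFinset with ht
  have him : ∀ μ ∈ t, 0 < μ.im := fun μ hμ =>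
    (Multiset.mem_filter.mp (Multiset.mem_toFinset.mp hμ)).2
  have hJcdiag : Jc = Matrix.diagonal
      (fun i : Fin (r + 2 * s) => if (i : ℕ) < r + s then (1 : ℂ) else -1) := by
    have hfun : (fun i : Fin (r + 2 * s) =>
        algebraMap ℝ ℂ (if (i : ℕ) < r + s then (1 : ℝ) else -1))
          = fun i : Fin (r + 2 * s) => if (i : ℕ) < r + s then (1 : ℂ) else -1 :=
      funext fun i => by by_cases h : (i : ℕ) < r + s <;> simp [h]
    rw [hJc, hJdef, Matrix.diagonal_map (map_zero _), hfun]
  have hiso : ∀ w ∈ (⨆ μ ∈ t, Module.End.maxGenEigenspace φ μ : Submodule ℂ _),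
      star w ⬝ᵥ (Jc *ᵥ w) = 0 := by
    intro w hw
    obtain ⟨μf, hsum⟩ := (Submodule.mem_iSup_finset_iff_exists_sum
      (fun μ => Module.End.maxGenEigenspace φ μ) w).mp hw
    rw [← hsum, aux_bform_sum_sum]
    refine Finset.sum_eq_zero fun i hi => Finset.sum_eq_zero fun j hj => ?_
    refine aux_genEigen_orthogonal Mc Jc hadj ?_ (μf i).2 (μf j).2
    intro hc
    have h1 := him i hi
    have h2 := him j hj
    rw [hc] at h1
    rw [Complex.conj_im] at h1
    linarith
  have hfin : Multiset.card Npos = ∑ μ ∈ t, finrank ℂ (Module.End.maxGenEigenspace φ μ) := by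
    refine (Multiset.toFinset_sum_count_eq Npos).symm.trans
      (Finset.sum_congr rfl fun μ hμ => ?_)
    rw [hNpos, Multiset.count_filter_of_pos (p := fun z : ℂ => 0 < z.im) (him μ hμ),
      count_roots, ← hφchar]
    exact (aux_finrank_maxGen_eq_rootMult φ μ).symm
  have hposle : Multiset.card Npos ≤ s := by
    rw [hfin, aux_sum_finrank_eq_finrank_biSup (Module.End.independent_maxGenEigenspace φ) t]
    refine aux_finrank_le_of_isotropic r s _ (fun w hw => ?_)
    rw [← hJcdiag]
    exact hiso w hw
  omega
end

section
/- Let r ≥ 1 and s be natural numbers, and let μ₁,…,μ_s, ν₁,…,ν_s, k₁,…,k_s, l₁,…,l_s, λ₁,…,λ_{r−1}, h₁,…,h_{r−1}, e be real numbers. Let J be the (r+2s)×(r+2s) block-diagonal matrix consisting of s copies of diag(1, −1) followed by the r×r identity, and let A be the (r+2s)×(r+2s) symmetric arrow matrix whose first 2s×2s diagonal part consists of the blocks [[μⱼ, νⱼ],[νⱼ, −μⱼ]], followed by the diagonal entries λ₁,…,λ_{r−1}, whose last column (and last row, by symmetry) above the corner is (k₁, l₁, …, k_s, l_s, h₁,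 …, h_{r−1}), whose bottom-right entry is e, and whose other entries are 0. Set u(X) = ∏_{i=1}^{r−1}(X − λᵢ), uᵢ(X) = ∏_{i'≠i}(X − λ_{i'}), v(X) = ∏_{j=1}^{s}(−(X − μⱼ)² − νⱼ²), and vⱼ(X) = ∏_{j'≠j}(−(X − μ_{j'})² − ν_{j'}²). Then det(X·J − A) = (X − e)·u(X)·v(X) − v(X)·Σ_{i=1}^{r−1} hᵢ²·uᵢ(X) − u(X)·Σ_{j=1}^{s}((μⱼ − X)·kⱼ² + 2·νⱼ·kⱼ·lⱼ + (X − μⱼ)·lⱼ²)·vⱼ(X) in ℝ[X]. -/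
open Matrix Polynomial

theorem aux_arrow {F : Type*} [Field F] {α β : Type*} [Fintype α] [DecidableEq α]
    [Fintype β] [DecidableEq β]
    (D : α → Matrix (Fin 2) (Fin 2) F) (dg : β → F) (w : (Fin 2 × α) ⊕ β → F) (c : F)
    (hD : ∀ a, (D a).det ≠ 0) (hdg : ∀ b, dg b ≠ 0) :
    (Matrix.fromBlocks
        (Matrix.fromBlocks (Matrix.blockDiagonal D) 0 0 (Matrix.diagonal dg))
        (Matrix.of fun i (_ : Fin 1) => w i)
        (Matrix.of fun (_ : Fin 1) j => w j)
        (Matrix.of fun _ _ => c)).det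
    = c * (∏ a, (D a).det) * (∏ b, dg b)
      - (∏ a, (D a).det) * ∑ b, (w (Sum.inr b))^2 * ∏ b' ∈ Finset.univ.erase b, dg b'
      - (∏ b, dg b) * ∑ a,
          ((D a 1 1) * (w (Sum.inl (0, a)))^2
            - ((D a 0 1) + (D a 1 0)) * (w (Sum.inl (0, a))) * (w (Sum.inl (1, a)))
            + (D a 0 0) * (w (Sum.inl (1, a)))^2)
          * ∏ a' ∈ Finset.univ.erase a, (D a').det := by
  set B := Matrix.fromBlocks (Matrix.blockDiagonal D) 0 0 (Matrix.diagonal dg) with hB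
  have hdetB : B.det = (∏ a, (D a).det) * (∏ b, dg b) := by
    rw [hB, det_fromBlocks_zero₂₁, det_blockDiagonal, det_diagonal]
  have hdetB0 : B.det ≠ 0 := by
    rw [hdetB]
    exact mul_ne_zero (Finset.prod_ne_zero_iff.2 fun a _ => hD a)
      (Finset.prod_ne_zero_iff.2 fun b _ => hdg b)
  haveI : Invertible B := B.invertibleOfIsUnitDet (isUnit_iff_ne_zero.2 hdetB0)
  rw [Matrix.det_fromBlocks₁₁, Matrix.invOf_eq_nonsing_inv]
  have hBinv : B⁻¹ = Matrix.fromBlocks (Matrix.blockDiagonal fun a => (D a)⁻¹) 0 0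
      (Matrix.diagonal fun b => (dg b)⁻¹) := by
    apply Matrix.inv_eq_right_inv
    have h1 : ∀ a, D a * (D a)⁻¹ = 1 := fun a =>
      Matrix.mul_nonsing_inv _ (isUnit_iff_ne_zero.2 (hD a))
    have h2 : ∀ b, dg b * (dg b)⁻¹ = (1 : F) := fun b => mul_inv_cancel₀ (hdg b)
    rw [hB, Matrix.fromBlocks_multiply, Matrix.diagonal_mul_diagonal, ← Matrix.blockDiagonal_mul]
    simp only [h1, h2, Matrix.mul_zero, Matrix.zero_mul, add_zero, zero_add]
    have h3 : Matrix.blockDiagonal (fun _ : α => (1 : Matrix (Fin 2) (Fin 2) F)) = 1 :=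
      Matrix.blockDiagonal_one
    have h4 : Matrix.diagonal (fun _ : β => (1 : F)) = 1 := Matrix.diagonal_one
    rw [h3, h4, Matrix.fromBlocks_one]
  rw [hBinv, hdetB, Matrix.det_fin_one]
  rw [Matrix.sub_apply]
  have key : ((Matrix.of fun (_ : Fin 1) j => w j) *
      (Matrix.fromBlocks (Matrix.blockDiagonal fun a => (D a)⁻¹) 0 0
        (Matrix.diagonal fun b => (dg b)⁻¹)) *
      (Matrix.of fun i (_ : Fin 1) => w i)) 0 0
      = (∑ a, (∑ i2 : Fin 2, ∑ j2 : Fin 2,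
            w (Sum.inl (i2, a)) * ((D a)⁻¹ i2 j2) * w (Sum.inl (j2, a))))
        + ∑ b, (w (Sum.inr b))^2 * (dg b)⁻¹ := by
    simp [Matrix.mul_apply, Fintype.sum_sum_type, Fintype.sum_prod_type, Fin.sum_univ_two,
      Matrix.blockDiagonal_apply, Matrix.diagonal_apply, Finset.sum_ite_eq, Finset.sum_ite_eq',
      Finset.mul_sum, Finset.sum_mul, sq, mul_comm, mul_assoc, mul_left_comm,
      Finset.sum_add_distrib]
    simp only [← Finset.sum_add_distrib]
    exact Finset.sum_congr rfl fun a _ => by ring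
  rw [key]
  have h5 : ∀ a : α, (∑ i2 : Fin 2, ∑ j2 : Fin 2,
        w (Sum.inl (i2, a)) * ((D a)⁻¹ i2 j2) * w (Sum.inl (j2, a)))
      = ((D a 1 1) * (w (Sum.inl (0, a)))^2
          - ((D a 0 1) + (D a 1 0)) * (w (Sum.inl (0, a))) * (w (Sum.inl (1, a)))
          + (D a 0 0) * (w (Sum.inl (1, a)))^2) * ((D a).det)⁻¹ := by
    intro a
    rw [Matrix.inv_def, Matrix.adjugate_fin_two]
    simp [Fin.sum_univ_two, Ring.inverse_eq_inv']
    ring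
  rw [Finset.sum_congr rfl fun a _ => h5 a]
  rw [Matrix.of_apply, mul_sub, mul_add, Finset.mul_sum, Finset.mul_sum]
  have h6 : ∀ a : α, (∏ a', (D a').det) * (∏ b, dg b)
        * (((D a 1 1) * (w (Sum.inl (0, a)))^2
          - ((D a 0 1) + (D a 1 0)) * (w (Sum.inl (0, a))) * (w (Sum.inl (1, a)))
          + (D a 0 0) * (w (Sum.inl (1, a)))^2) * ((D a).det)⁻¹)
      = (∏ b, dg b) * (((D a 1 1) * (w (Sum.inl (0, a)))^2
          - ((D a 0 1) + (D a 1 0)) * (w (Sum.inl (0, a))) * (w (Sum.inl (1, a)))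
          + (D a 0 0) * (w (Sum.inl (1, a)))^2) * ∏ a' ∈ Finset.univ.erase a, (D a').det) := by
    intro a
    rw [← Finset.mul_prod_erase Finset.univ _ (Finset.mem_univ a)]
    field_simp [hD a]
  have h7 : ∀ b : β, (∏ a, (D a).det) * (∏ b', dg b')
        * ((w (Sum.inr b))^2 * (dg b)⁻¹)
      = (∏ a, (D a).det) * ((w (Sum.inr b))^2 * ∏ b' ∈ Finset.univ.erase b, dg b') := by
    intro b
    rw [← Finset.mul_prod_erase Finset.univ _ (Finset.mem_univ b)]
    field_simp [hdg b]
  rw [Finset.sum_congr rfl fun a _ => h6 a, Finset.sum_congr rfl fun b _ => h7 b,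
    ← Finset.mul_sum, ← Finset.mul_sum]
  ring


theorem stmt_16 (r s : ℕ) (hr : 1 ≤ r)
    (μ ν k l : Fin s → ℝ) (lam h : Fin (r - 1) → ℝ) (e : ℝ)
    (J A : Matrix (((Fin 2 × Fin s) ⊕ Fin (r - 1)) ⊕ Fin 1)
                  (((Fin 2 × Fin s) ⊕ Fin (r - 1)) ⊕ Fin 1) ℝ)
    (hJ : J = Matrix.fromBlocks
      (Matrix.fromBlocks
        (Matrix.blockDiagonal fun _ : Fin s => !![(1 : ℝ), 0; 0, -1]) 0 0 1)
      0 0 1)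
    (hA : A = Matrix.fromBlocks
      (Matrix.fromBlocks
        (Matrix.blockDiagonal fun j : Fin s => !![μ j, ν j; ν j, -μ j]) 0 0
        (Matrix.diagonal lam))
      (Matrix.of fun i (_ : Fin 1) =>
        Sum.elim (fun a : Fin 2 × Fin s => if a.1 = 0 then k a.2 else l a.2) h i)
      (Matrix.of fun (_ : Fin 1) j =>
        Sum.elim (fun a : Fin 2 × Fin s => if a.1 = 0 then k a.2 else l a.2) h j)
      (Matrix.of fun (_ _ : Fin 1) => e))
    (u : Polynomial ℝ) (hu : u = ∏ i, (X - C (lam i)))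
    (ui : Fin (r - 1) → Polynomial ℝ)
    (hui : ∀ i, ui i = ∏ i' ∈ Finset.univ.erase i, (X - C (lam i')))
    (v : Polynomial ℝ) (hv : v = ∏ j, (-(X - C (μ j)) ^ 2 - C (ν j) ^ 2))
    (vj : Fin s → Polynomial ℝ)
    (hvj : ∀ j, vj j = ∏ j' ∈ Finset.univ.erase j, (-(X - C (μ j')) ^ 2 - C (ν j') ^ 2)) :
    ((X : Polynomial ℝ) • J.map (C : ℝ → Polynomial ℝ)
        - A.map (C : ℝ → Polynomial ℝ)).det
      = (X - C e) * u * v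
        - v * ∑ i, C (h i) ^ 2 * ui i
        - u * ∑ j, ((C (μ j) - X) * C (k j) ^ 2
            + 2 * C (ν j) * C (k j) * C (l j)
            + (X - C (μ j)) * C (l j) ^ 2) * vj j := by
  have hquad : ∀ a b : ℝ, (-(X - C a)^2 - C b^2 : ℝ[X]) ≠ 0 := by
    intro a b hc
    have h2 : (-(X - C a)^2 - C b^2 : ℝ[X]) = -(X^2) + C (2 * a) * X - C (a^2 + b^2) := by
      push_cast [C_mul, C_add, C_pow, map_ofNat]; ring
    rw [h2] at hc
    have := congrArg (fun p => p.coeff 2) hc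
    simp only [coeff_add, coeff_sub, coeff_neg, coeff_X_pow, coeff_C_mul, coeff_X, coeff_C,
      coeff_zero] at this
    norm_num at this
  set fK : ℝ[X] →+* RatFunc ℝ := (algebraMap ℝ[X] (RatFunc ℝ)) with hfK
  have hinj : Function.Injective fK := RatFunc.algebraMap_injective ℝ
  apply hinj
  rw [RingHom.map_det, RingHom.mapMatrix_apply]
  have hM : (((X : ℝ[X]) • J.map (C : ℝ → Polynomial ℝ)
        - A.map (C : ℝ → Polynomial ℝ)).map fK)
      = Matrix.fromBlocks
        (Matrix.fromBlocks
          (Matrix.blockDiagonal fun j : Fin s =>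
            !![fK (X - C (μ j)), fK (-C (ν j));
               fK (-C (ν j)), fK (C (μ j) - X)])
          0 0 (Matrix.diagonal fun i => fK (X - C (lam i))))
        (Matrix.of fun i (_ : Fin 1) => (fun i => fK
           (-C (Sum.elim (fun a : Fin 2 × Fin s => if a.1 = 0 then k a.2 else l a.2) h i))) i)
        (Matrix.of fun (_ : Fin 1) j => (fun i => fK
           (-C (Sum.elim (fun a : Fin 2 × Fin s => if a.1 = 0 then k a.2 else l a.2) h i))) j)
        (Matrix.of fun (_ _ : Fin 1) => fK (X - C e)) := by
    subst hJ hA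
    ext i j
    rcases i with (⟨i2, is⟩ | i1) | i0 <;> rcases j with (⟨j2, jt⟩ | j1) | j0 <;>
      simp only [Matrix.map_apply, Matrix.sub_apply, Matrix.smul_apply,
        fromBlocks_apply₁₁, fromBlocks_apply₁₂, fromBlocks_apply₂₁, fromBlocks_apply₂₂,
        Matrix.zero_apply, Matrix.of_apply, smul_eq_mul]
    · rw [blockDiagonal_apply, blockDiagonal_apply, blockDiagonal_apply]
      by_cases hq : is = jt
      · subst hq
        simp only [if_pos rfl, ite_self]
        fin_cases i2 <;> fin_cases j2 <;>
          simp [map_sub, _root_.map_mul, _root_.map_one, _root_.map_neg, mul_comm] <;>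
          ring
      · simp [hq]
    · simp
    · simp
    · simp
    · rw [diagonal_apply, Matrix.one_apply, diagonal_apply]
      by_cases hq : i1 = j1
      · subst hq; simp [map_sub, _root_.map_mul, mul_comm]
      · simp [hq]
    · simp
    · simp
    · simp
    · have hq : i0 = j0 := Subsingleton.elim _ _
      subst hq
      simp [Matrix.one_apply_eq, map_sub, _root_.map_mul, _root_.map_one, mul_comm]
  rw [hM]
  have hDdet : ∀ j : Fin s, (!![fK (X - C (μ j)), fK (-C (ν j));
               fK (-C (ν j)), fK (C (μ j) - X)]).det = fK (-(X - C (μ j))^2 - C (ν j)^2) := by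
    intro j
    rw [Matrix.det_fin_two_of, ← _root_.map_mul, ← _root_.map_mul, ← map_sub]
    congr 1
    ring
  have hD0 : ∀ j : Fin s, (!![fK (X - C (μ j)), fK (-C (ν j));
               fK (-C (ν j)), fK (C (μ j) - X)]).det ≠ 0 := by
    intro j
    rw [hDdet j]
    exact fun hc => hquad (μ j) (ν j) (hinj (by simpa using hc))
  have hdg0 : ∀ i : Fin (r - 1), fK (X - C (lam i)) ≠ 0 := by
    intro i hc
    exact X_sub_C_ne_zero (lam i) (hinj (by simpa using hc))
  rw [aux_arrow _ _ _ _ hD0 hdg0]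
  simp only [hDdet]
  simp only [Sum.elim_inl, Sum.elim_inr, Matrix.cons_val', Matrix.cons_val_zero,
    Matrix.cons_val_one, Matrix.head_cons, Matrix.head_fin_const, Matrix.empty_val',
    Matrix.cons_val_fin_one]
  norm_num
  simp only [hu, hv, hui, hvj, map_sub, map_add, _root_.map_mul, map_pow, _root_.map_neg,
    map_sum, map_prod, map_ofNat]
  have e2 : ∀ x : Fin s,
      ((fK (C (μ x)) - fK X) * fK (C (k x)) ^ 2
        - (-fK (C (ν x)) + -fK (C (ν x))) * fK (C (k x)) * fK (C (l x))
        + (fK X - fK (C (μ x))) * fK (C (l x)) ^ 2)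
      = ((fK (C (μ x)) - fK X) * fK (C (k x)) ^ 2
        + 2 * fK (C (ν x)) * fK (C (k x)) * fK (C (l x))
        + (fK X - fK (C (μ x))) * fK (C (l x)) ^ 2) := fun x => by ring
  simp only [e2]
  ring
end

section
/- Let n ≥ 1, let λ₁ < λ₂ < … < λ_n be real numbers, let h₁,…,h_n be nonzero real numbers, and let d ∈ ℝ. Then the polynomial p(X) = (X − d)·∏_{i=1}^{n}(X − λᵢ) + Σ_{i=1}^{n} hᵢ²·∏_{j≠i}(X − λⱼ) has at least n − 1 distinct real roots. -/
open Polynomial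

private lemma root_Ioo (p : Polynomial ℝ) {a b : ℝ} (hab : a < b)
    (hs : p.eval a * p.eval b < 0) : ∃ x ∈ Set.Ioo a b, p.IsRoot x := by
  rcases mul_neg_iff.mp hs with ⟨ha, hb⟩ | ⟨ha, hb⟩
  · obtain ⟨x, hx, hx0⟩ := intermediate_value_Ioo' hab.le p.continuous.continuousOn
      (Set.mem_Ioo.2 ⟨hb, ha⟩)
    exact ⟨x, hx, hx0⟩
  · obtain ⟨x, hx, hx0⟩ := intermediate_value_Ioo hab.le p.continuous.continuousOn
      (Set.mem_Ioo.2 ⟨ha, hb⟩)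
    exact ⟨x, hx, hx0⟩

private lemma neg_one_pow_sq (e : ℕ) : ((-1:ℝ) ^ e) ^ 2 = 1 := by
  rw [← pow_mul, mul_comm, pow_mul]; norm_num

private lemma pos_helper {c P Q : ℝ} (hc : c ^ 2 = 1) (hP : 0 < P) (hQ : 0 < Q) :
    0 < c * (P * (c * Q)) := by
  have h : c * (P * (c * Q)) = c ^ 2 * (P * Q) := by ring
  rw [h, hc, one_mul]; exact mul_pos hP hQ

private lemma sign_helper {c u v : ℝ} (hc : c ^ 2 = 1) (h1 : 0 < c * -1 * u)
    (h2 : 0 < c * v) : u * v < 0 := by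
  have h3 : (c * -1 * u) * (c * v) = -(c ^ 2 * (u * v)) := by ring
  rw [hc, one_mul] at h3
  have := mul_pos h1 h2
  linarith

private lemma mul_sq_neg {x y u v : ℝ} (hx : x ≠ 0) (hy : y ≠ 0) (huv : u * v < 0) :
    (x ^ 2 * u) * (y ^ 2 * v) < 0 := by
  have hx2 : 0 < x ^ 2 := by positivity
  have hy2 : 0 < y ^ 2 := by positivity
  have h := mul_neg_of_pos_of_neg (mul_pos hx2 hy2) huv
  have he : (x ^ 2 * u) * (y ^ 2 * v) = (x ^ 2 * y ^ 2) * (u * v) := by ring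
  linarith [he ▸ h]

theorem stmt_17 (n : ℕ) (hn : 1 ≤ n)
    (lam : Fin n → ℝ) (hlam : StrictMono lam)
    (h : Fin n → ℝ) (hh : ∀ i, h i ≠ 0) (d : ℝ)
    (p : Polynomial ℝ)
    (hp : p = (X - C d) * ∏ i, (X - C (lam i))
      + ∑ i, C (h i) ^ 2 * ∏ j ∈ Finset.univ.erase i, (X - C (lam j))) :
    ∃ t : Finset ℝ, t.card = n - 1 ∧ ∀ x ∈ t, p.IsRoot x := by
  set S : Fin n → ℝ := fun i => ∏ j ∈ Finset.univ.erase i, (lam i - lam j) with hS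
  have hev : ∀ i : Fin n, p.eval (lam i) = (h i)^2 * S i := by
    intro i
    subst hp
    simp only [eval_add, eval_mul, eval_prod, eval_sub, eval_X, eval_C,
      eval_finset_sum, eval_pow]
    rw [Finset.prod_eq_zero (Finset.mem_univ i) (by simp), mul_zero, zero_add,
      Finset.sum_eq_single i]
    · intro k _ hk
      rw [Finset.prod_eq_zero (Finset.mem_erase.2 ⟨Ne.symm hk, Finset.mem_univ i⟩) (by simp),
        mul_zero]
    · intro hi; exact absurd (Finset.mem_univ i) hi
  have hsplit : ∀ i : Fin n, Finset.univ.erase i = Finset.Iio i ∪ Finset.Ioi i := by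
    intro i; ext j
    simp only [Finset.mem_erase, Finset.mem_union, Finset.mem_Iio, Finset.mem_Ioi,
      Finset.mem_univ, and_true]
    exact ne_iff_lt_or_gt
  have hSsign : ∀ i : Fin n, 0 < (-1:ℝ) ^ (n - 1 - (i:ℕ)) * S i := by
    intro i
    have hdisj : Disjoint (Finset.Iio i) (Finset.Ioi i) := by
      simp only [Finset.disjoint_left, Finset.mem_Iio, Finset.mem_Ioi]
      intro a ha; exact not_lt.2 ha.le
    have h1 : 0 < ∏ j ∈ Finset.Iio i, (lam i - lam j) := by
      apply Finset.prod_pos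
      intro j hj
      simp only [Finset.mem_Iio] at hj
      linarith [hlam hj]
    have h3 : 0 < ∏ j ∈ Finset.Ioi i, (lam j - lam i) := by
      apply Finset.prod_pos
      intro j hj
      simp only [Finset.mem_Ioi] at hj
      linarith [hlam hj]
    have h2 : ∏ j ∈ Finset.Ioi i, (lam i - lam j)
        = (-1:ℝ) ^ (n - 1 - (i:ℕ)) * ∏ j ∈ Finset.Ioi i, (lam j - lam i) := by
      rw [← Fin.card_Ioi i, ← Finset.prod_const, ← Finset.prod_mul_distrib]
      apply Finset.prod_congr rfl
      intro j _; ring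
    have : S i = (∏ j ∈ Finset.Iio i, (lam i - lam j)) *
        ((-1:ℝ) ^ (n - 1 - (i:ℕ)) * ∏ j ∈ Finset.Ioi i, (lam j - lam i)) := by
      rw [hS]
      simp only
      rw [hsplit i, Finset.prod_union hdisj, h2]
    rw [this]
    exact pos_helper (neg_one_pow_sq _) h1 h3
  have hroot : ∀ k : Fin (n-1), ∃ x,
      x ∈ Set.Ioo (lam ⟨k, by omega⟩) (lam ⟨k+1, by omega⟩) ∧ p.IsRoot x := by
    intro k
    have hk1 : (k:ℕ) < n - 1 := k.2
    set a : Fin n := ⟨k, by omega⟩ with ha'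
    set b : Fin n := ⟨k+1, by omega⟩ with hb'
    have hab : lam a < lam b := hlam (by simp [ha', hb', Fin.lt_def])
    have hmul : p.eval (lam a) * p.eval (lam b) < 0 := by
      rw [hev a, hev b]
      have hea : n - 1 - (a:ℕ) = (n - 1 - (b:ℕ)) + 1 := by
        simp only [ha', hb']; omega
      have hsa := hSsign a
      have hsb := hSsign b
      rw [hea, pow_succ] at hsa
      exact mul_sq_neg (hh a) (hh b) (sign_helper (neg_one_pow_sq _) hsa hsb)
    obtain ⟨x, hx, hx0⟩ := root_Ioo p hab hmul
    exact ⟨x, hx, hx0⟩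
  choose r hr1 hr2 using hroot
  have hrmono : StrictMono r := by
    intro k l hkl
    have h1 : r k < lam ⟨(k:ℕ)+1, by omega⟩ := (hr1 k).2
    have h2 : lam ⟨(l:ℕ), by omega⟩ < r l := (hr1 l).1
    have h3 : lam ⟨(k:ℕ)+1, by omega⟩ ≤ lam ⟨(l:ℕ), by omega⟩ := by
      apply hlam.monotone
      simp only [Fin.le_def]
      exact hkl
    linarith
  refine ⟨Finset.image r Finset.univ, ?_, ?_⟩
  · rw [Finset.card_image_of_injective _ hrmono.injective]
    simp
  · intro x hx
    simp only [Finset.mem_image, Finset.mem_univ, true_and] at hx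
    obtain ⟨k, rfl⟩ := hx
    exact hr2 k
end
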